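/- arXiv:2604.02858 — 4 statements merged into one kernel-verified Lean document; each statement's English description precedes it below -/
import Mathlib

section
/- Let f : ℝⁿ → ℝ be convex and continuously differentiable with L-Lipschitz gradient. Then for all x, y, ‖∇f(x) - ∇f(y)‖² ≤ 2L · D_f(x,y), where D_f(x,y) = f(x) - f(y) - ⟨∇f(y), x-y⟩ is the Bregman divergence. -/
open scoped RealInnerProductSpace

variable {n : ℕ}

-- derivative of f along a line
lemma line_hasDerivAt (f : EuclideanSpace ℝ (Fin n) → ℝ)
    (f' : EuclideanSpace ℝ (Fin n) → EuclideanSpace ℝ (Fin n))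
    (hgrad : ∀ x, HasGradientAt f (f' x) x)
    (b d : EuclideanSpace ℝ (Fin n)) (t : ℝ) :
    HasDerivAt (fun s : ℝ => f (b + s • d)) ⟪f' (b + t • d), d⟫ t := by
  have hc : HasDerivAt (fun s : ℝ => b + s • d) d t := by
    simpa using ((hasDerivAt_id t).smul_const d).const_add b
  have hf := (hasGradientAt_iff_hasFDerivAt.1 (hgrad (b + t • d)))
  have := hf.comp_hasDerivAt t hc
  simpa [InnerProductSpace.toDual_apply_apply, Function.comp_def] using this

-- gradient inequality for convex f
lemma grad_ineq (f : EuclideanSpace ℝ (Fin n) → ℝ)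
    (f' : EuclideanSpace ℝ (Fin n) → EuclideanSpace ℝ (Fin n))
    (hconv : ConvexOn ℝ Set.univ f)
    (hgrad : ∀ x, HasGradientAt f (f' x) x)
    (a b : EuclideanSpace ℝ (Fin n)) :
    f b + ⟪f' b, a - b⟫ ≤ f a := by
  set d := a - b with hd
  have hg : ConvexOn ℝ Set.univ (fun s : ℝ => f (b + s • d)) := by
    have h := hconv.comp_affineMap (AffineMap.lineMap b a)
    have he : (f ∘ (AffineMap.lineMap b a : ℝ →ᵃ[ℝ] _)) = fun s : ℝ => f (b + s • d) := by
      funext s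
      simp [AffineMap.lineMap_apply_module, hd]
      ring_nf
      congr 1
      module
    rw [he] at h
    simpa using h
  have h01 : (0:ℝ) < 1 := one_pos
  have hder := line_hasDerivAt f f' hgrad b d 0
  have := hg.le_slope_of_hasDerivAt (Set.mem_univ 0) (Set.mem_univ 1) h01 hder
  rw [slope_def_field] at this
  simp only [zero_smul, add_zero, one_smul] at this
  have hba : b + d = a := by rw [hd]; abel
  rw [hba] at this
  have : ⟪f' b, d⟫ ≤ f a - f b := by
    simpa [div_one] using this
  linarith

-- descent lemma
set_option maxHeartbeats 1000000 in
lemma descent (f : EuclideanSpace ℝ (Fin n) → ℝ)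
    (f' : EuclideanSpace ℝ (Fin n) → EuclideanSpace ℝ (Fin n)) (L : ℝ)
    (hgrad : ∀ x, HasGradientAt f (f' x) x)
    (hcont : Continuous f')
    (hlip : LipschitzWith (Real.toNNReal L) f')
    (hL : 0 ≤ L)
    (a b : EuclideanSpace ℝ (Fin n)) :
    f a ≤ f b + ⟪f' b, a - b⟫ + L / 2 * ‖a - b‖ ^ 2 := by
  set d := a - b with hd
  set g : ℝ → ℝ := fun s => f (b + s • d) with hgdef
  set g' : ℝ → ℝ := fun s => ⟪f' (b + s • d), d⟫ with hg'def
  have hder : ∀ t ∈ Set.uIcc (0:ℝ) 1, HasDerivAt g (g' t) t :=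
    fun t _ => line_hasDerivAt f f' hgrad b d t
  have hcont' : Continuous g' := by
    apply Continuous.inner (hcont.comp (by continuity)) continuous_const
  have hint : IntervalIntegrable g' MeasureTheory.volume 0 1 :=
    hcont'.intervalIntegrable 0 1
  have key : g 1 - g 0 = ∫ t in (0:ℝ)..1, g' t :=
    (intervalIntegral.integral_eq_sub_of_hasDerivAt hder hint).symm
  have hbd : ∀ t ∈ Set.Icc (0:ℝ) 1, g' t ≤ g' 0 + L * ‖d‖ ^ 2 * t := by
    intro t ht
    have h1 : g' t - g' 0 = ⟪f' (b + t • d) - f' b, d⟫ := by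
      simp [hg'def, inner_sub_left]
    have h2 : ⟪f' (b + t • d) - f' b, d⟫ ≤ ‖f' (b + t • d) - f' b‖ * ‖d‖ :=
      real_inner_le_norm _ _
    have h3 : ‖f' (b + t • d) - f' b‖ ≤ L * (t * ‖d‖) := by
      have := hlip.dist_le_mul (b + t • d) b
      rw [dist_eq_norm] at this
      have h4 : dist (b + t • d) b = t * ‖d‖ := by
        rw [dist_eq_norm]
        simp [norm_smul, abs_of_nonneg ht.1]
      calc ‖f' (b + t • d) - f' b‖ = dist (f' (b + t • d)) (f' b) := (dist_eq_norm _ _).symm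
        _ ≤ (Real.toNNReal L) * dist (b + t • d) b := hlip.dist_le_mul _ _
        _ = L * (t * ‖d‖) := by rw [h4, Real.coe_toNNReal L hL]
    nlinarith [norm_nonneg d, norm_nonneg (f' (b + t • d) - f' b)]
  have hmono : ∫ t in (0:ℝ)..1, g' t ≤ ∫ t in (0:ℝ)..1, (g' 0 + L * ‖d‖ ^ 2 * t) := by
    apply intervalIntegral.integral_mono_on zero_le_one hint
    · exact (continuous_const.add (continuous_const.mul continuous_id)).intervalIntegrable 0 1
    · exact hbd
  have hval : ∫ t in (0:ℝ)..1, (g' 0 + L * ‖d‖ ^ 2 * t) = g' 0 + L * ‖d‖ ^ 2 / 2 := by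
    rw [intervalIntegral.integral_add (intervalIntegrable_const)
      ((by continuity : Continuous fun t : ℝ => L * ‖d‖ ^ 2 * t).intervalIntegrable 0 1)]
    rw [intervalIntegral.integral_const_mul, integral_id, intervalIntegral.integral_const]
    norm_num
    ring
  have hg1 : g 1 = f a := by simp [hgdef, hd]
  have hg0 : g 0 = f b := by simp [hgdef]
  have hg'0 : g' 0 = ⟪f' b, d⟫ := by simp [hg'def]
  have final : f a - f b ≤ ⟪f' b, d⟫ + L * ‖d‖ ^ 2 / 2 := by
    rw [← hg1, ← hg0, ← hg'0]
    linarith [key, hmono, hval]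
  linarith


set_option maxHeartbeats 1000000 in
/-- For a convex, continuously differentiable `f : ℝⁿ → ℝ` with
L-Lipschitz gradient, `‖∇f(x) - ∇f(y)‖² ≤ 2L · D_f(x,y)` where
`D_f(x,y) = f x - f y - ⟪∇f y, x - y⟫`. -/
theorem grad_sq_le_two_L_bregman
    (n : ℕ) (f : EuclideanSpace ℝ (Fin n) → ℝ)
    (f' : EuclideanSpace ℝ (Fin n) → EuclideanSpace ℝ (Fin n)) (L : ℝ)
    (hconv : ConvexOn ℝ Set.univ f)
    (hgrad : ∀ x, HasGradientAt f (f' x) x)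
    (hcont : Continuous f')
    (hlip : LipschitzWith (Real.toNNReal L) f') :
    ∀ x y, ‖f' x - f' y‖ ^ 2 ≤ 2 * L * (f x - f y - ⟪f' y, x - y⟫) := by
  intro x y
  by_cases hL : 0 < L
  · set g := f' x - f' y with hgd
    set z := x - (L⁻¹) • g with hz
    have hLne : L ≠ 0 := ne_of_gt hL
    have h1 := grad_ineq f f' hconv hgrad z y
    have h2 := descent f f' L hgrad hcont hlip hL.le z x
    have e1 : z - y = (x - y) - (L⁻¹) • g := by rw [hz]; abel
    have e2 : ⟪f' y, z - y⟫ = ⟪f' y, x - y⟫ - L⁻¹ * ⟪f' y, g⟫ := by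
      rw [e1, inner_sub_right, real_inner_smul_right]
    have e3 : z - x = -((L⁻¹) • g) := by rw [hz]; abel
    have e4 : ⟪f' x, z - x⟫ = -(L⁻¹ * ⟪f' x, g⟫) := by
      rw [e3, inner_neg_right, real_inner_smul_right]
    have e5 : ‖z - x‖ ^ 2 = L⁻¹ ^ 2 * ‖g‖ ^ 2 := by
      rw [e3, norm_neg, norm_smul, mul_pow]
      congr 1
      rw [Real.norm_eq_abs, abs_of_pos (inv_pos.2 hL)]
    have e6 : ⟪f' x, g⟫ - ⟪f' y, g⟫ = ‖g‖ ^ 2 := by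
      rw [← inner_sub_left, ← hgd, real_inner_self_eq_norm_sq]
    rw [e2] at h1
    rw [e4, e5] at h2
    have hc2 : L / 2 * (L⁻¹ ^ 2 * ‖g‖ ^ 2) = L⁻¹ / 2 * ‖g‖ ^ 2 := by
      field_simp
    rw [hc2] at h2
    have key : L⁻¹ / 2 * ‖g‖ ^ 2 ≤ f x - f y - ⟪f' y, x - y⟫ := by
      have hmul : L⁻¹ * (⟪f' x, g⟫ - ⟪f' y, g⟫) = L⁻¹ * ‖g‖ ^ 2 := by rw [e6]
      nlinarith [h1, h2]
    calc ‖g‖ ^ 2 = 2 * L * (L⁻¹ / 2 * ‖g‖ ^ 2) := by field_simp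
      _ ≤ 2 * L * (f x - f y - ⟪f' y, x - y⟫) :=
          mul_le_mul_of_nonneg_left key (by positivity)
  · push_neg at hL
    have h0 : Real.toNNReal L = 0 := by simp [Real.toNNReal_of_nonpos hL]
    have hfc : f' x = f' y := by
      have := hlip.dist_le_mul x y
      rw [h0] at this
      simpa [dist_le_zero] using this
    have h1 := grad_ineq f f' hconv hgrad x y
    have h2 := grad_ineq f f' hconv hgrad y x
    have e : ⟪f' x, y - x⟫ = -⟪f' y, x - y⟫ := by
      rw [hfc, ← inner_neg_right]
      congr 1
      abel
    rw [e] at h2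
    have hB : f x - f y - ⟪f' y, x - y⟫ = 0 := by linarith
    rw [hfc, hB]
    simp
end

section
/- Let g₁,…,g_m ∈ ℝᵈ with Σ_{j=1}^m g_j = 0, and let π be a uniformly random permutation of {1,…,m}. Then for every ℓ ∈ {0,…,m}, E[‖Σ_{p=0}^{ℓ-1} g_{π(p)}‖²] ≤ (m/2) · (1/m) Σ_{j=1}^m ‖g_j‖², i.e., the expected squared norm of any partial sum of a random permutation of vectors summing to zero is at most (1/2) Σ_j ‖g_j‖². -/
/-- if `g₁,…,g_m` sum to zero, then for every `ℓ ∈ {0,…,m}` the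
expected squared norm (over a uniformly random permutation `π`) of the partial
sum `Σ_{p=0}^{ℓ-1} g_{π(p)}` is at most `(m/2)·(1/m)Σ_j ‖g_j‖² = (1/2)Σ_j ‖g_j‖²`. -/
theorem random_reshuffling_partial_sum_bound
    (m d : ℕ) (g : Fin m → EuclideanSpace ℝ (Fin d))
    (hG : ∑ j, g j = 0) (ℓ : ℕ) (hℓ : ℓ ≤ m) :
    (1 / (Nat.factorial m : ℝ)) *
        ∑ π : Equiv.Perm (Fin m),
          ‖∑ p ∈ Finset.univ.filter (fun p : Fin m => (p : ℕ) < ℓ), g (π p)‖ ^ 2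
      ≤ ((m : ℝ) / 2) * ((1 / (m : ℝ)) * ∑ j, ‖g j‖ ^ 2) := by
  have hRHS0 : (0:ℝ) ≤ ((m : ℝ) / 2) * ((1 / (m : ℝ)) * ∑ j, ‖g j‖ ^ 2) := by
    positivity
  -- dispose of the trivial case ℓ = 0
  rcases Nat.eq_zero_or_pos ℓ with hℓ0 | hℓ1
  · subst hℓ0
    have hKe : Finset.univ.filter (fun p : Fin m => (p : ℕ) < 0) = ∅ := by
      apply Finset.filter_false_of_mem
      intro p _
      exact Nat.not_lt_zero _
    have hz : (∑ π : Equiv.Perm (Fin m),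
        ‖∑ p ∈ Finset.univ.filter (fun p : Fin m => (p : ℕ) < 0), g (π p)‖ ^ 2) = 0 := by
      simp [hKe]
    rw [hz, mul_zero]
    exact hRHS0
  -- dispose of the case m ≤ 1 (then m = 1, ℓ = 1, and g ≡ 0)
  rcases lt_or_ge m 2 with hm | hm2
  · interval_cases m
    · omega
    · have hg : ∀ j : Fin 1, g j = 0 := by
        intro j
        have h0 : j = 0 := Subsingleton.elim _ _
        rw [h0, ← Fin.sum_univ_one g]
        exact hG
      have hz : (∑ π : Equiv.Perm (Fin 1),
          ‖∑ p ∈ Finset.univ.filter (fun p : Fin 1 => (p : ℕ) < ℓ), g (π p)‖ ^ 2) = 0 := by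
        apply Finset.sum_eq_zero
        intro π _
        rw [Finset.sum_congr rfl fun p _ => hg (π p), Finset.sum_const, smul_zero]
        simp
      rw [hz, mul_zero]
      exact hRHS0
  -- main case : m ≥ 2
  set K : Finset (Fin m) := Finset.univ.filter (fun p : Fin m => (p : ℕ) < ℓ) with hKdef
  set G : ℝ := ∑ j, ‖g j‖ ^ 2 with hGdef
  set C : Fin m → Fin m → ℝ :=
    fun p q => ∑ π : Equiv.Perm (Fin m), (inner ℝ (g (π p)) (g (π q)) : ℝ) with hCdef
  -- expansion of the squared norm
  have h1 : ∀ π : Equiv.Perm (Fin m),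
      ‖∑ p ∈ K, g (π p)‖ ^ 2 = ∑ p ∈ K, ∑ q ∈ K, (inner ℝ (g (π p)) (g (π q)) : ℝ) := by
    intro π
    rw [← real_inner_self_eq_norm_sq, sum_inner]
    exact Finset.sum_congr rfl fun p _ => inner_sum _ _ _
  have hswap : (∑ π : Equiv.Perm (Fin m), ‖∑ p ∈ K, g (π p)‖ ^ 2)
      = ∑ p ∈ K, ∑ q ∈ K, C p q := by
    rw [Finset.sum_congr rfl fun π _ => h1 π, Finset.sum_comm]
    exact Finset.sum_congr rfl fun p _ => Finset.sum_comm
  -- symmetry under relabeling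
  have hsym : ∀ (σ : Equiv.Perm (Fin m)) (p q : Fin m), C (σ p) (σ q) = C p q := by
    intro σ p q
    calc C (σ p) (σ q)
        = ∑ π : Equiv.Perm (Fin m), (inner ℝ (g ((π * σ) p)) (g ((π * σ) q)) : ℝ) := by
          simp only [hCdef, Equiv.Perm.mul_apply]
      _ = C p q :=
          Equiv.sum_comp (Equiv.mulRight σ)
            (fun π => (inner ℝ (g (π p)) (g (π q)) : ℝ))
  -- each row of C sums to zero
  have hrow : ∀ p : Fin m, ∑ q, C p q = 0 := by
    intro p
    rw [Finset.sum_comm]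
    apply Finset.sum_eq_zero
    intro π _
    have hzero : ∑ q, g (π q) = 0 := by
      rw [Equiv.sum_comp π g]; exact hG
    rw [← inner_sum, hzero, inner_zero_right]
  -- two distinct indices
  have hm0 : 0 < m := by omega
  have hm1 : 1 < m := by omega
  set p0 : Fin m := ⟨0, hm0⟩ with hp0def
  set p1 : Fin m := ⟨1, hm1⟩ with hp1def
  have h01 : p0 ≠ p1 := by simp [hp0def, hp1def, Fin.ext_iff]
  set A : ℝ := C p0 p0 with hAdef
  set c : ℝ := C p0 p1 with hcdef
  -- diagonal entries all equal A
  have hdiag : ∀ p : Fin m, C p p = A := by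
    intro p
    have := hsym (Equiv.swap p0 p) p0 p0
    rwa [Equiv.swap_apply_left] at this
  -- off-diagonal entries all equal c
  have hoff : ∀ p q : Fin m, p ≠ q → C p q = c := by
    intro p q hpq
    have e0 : Equiv.swap p0 p p0 = p := Equiv.swap_apply_left p0 p
    have hq₁p : Equiv.swap p0 p p1 ≠ p := by
      intro h
      exact h01 ((Equiv.swap p0 p).injective (by rw [e0, h]))
    have hσ0 : (Equiv.swap (Equiv.swap p0 p p1) q * Equiv.swap p0 p) p0 = p := by
      rw [Equiv.Perm.mul_apply, e0]
      exact Equiv.swap_apply_of_ne_of_ne hq₁p.symm hpq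
    have hσ1 : (Equiv.swap (Equiv.swap p0 p p1) q * Equiv.swap p0 p) p1 = q := by
      rw [Equiv.Perm.mul_apply]
      exact Equiv.swap_apply_left _ _
    have hs := hsym (Equiv.swap (Equiv.swap p0 p p1) q * Equiv.swap p0 p) p0 p1
    rw [hσ0, hσ1] at hs
    exact hs
  -- A is nonnegative
  have hA0 : 0 ≤ A := by
    rw [hAdef, hCdef]
    apply Finset.sum_nonneg
    intro π _
    exact real_inner_self_nonneg
  -- m * A = m! * G
  have hsumdiag : ∑ p, C p p = (m.factorial : ℝ) * G := by
    rw [hCdef]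
    rw [Finset.sum_comm]
    have hd : ∀ π : Equiv.Perm (Fin m),
        (∑ p, (inner ℝ (g (π p)) (g (π p)) : ℝ)) = G := by
      intro π
      have he : (∑ p, (inner ℝ (g (π p)) (g (π p)) : ℝ)) = ∑ p, ‖g (π p)‖ ^ 2 :=
        Finset.sum_congr rfl fun p _ => real_inner_self_eq_norm_sq _
      rw [he, hGdef]
      exact Equiv.sum_comp π (fun j => ‖g j‖ ^ 2)
    rw [Finset.sum_congr rfl fun π _ => hd π, Finset.sum_const, Finset.card_univ,
      Fintype.card_perm, Fintype.card_fin, nsmul_eq_mul]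
  have hmA : (m : ℝ) * A = (m.factorial : ℝ) * G := by
    rw [← hsumdiag, Finset.sum_congr rfl fun p _ => hdiag p, Finset.sum_const,
      Finset.card_univ, Fintype.card_fin, nsmul_eq_mul]
  -- A + (m-1) c = 0
  have hAc : A + ((m : ℝ) - 1) * c = 0 := by
    have h := hrow p0
    rw [← Finset.add_sum_erase _ _ (Finset.mem_univ p0)] at h
    rw [Finset.sum_congr rfl
      (fun q hq => hoff p0 q (Ne.symm (Finset.ne_of_mem_erase hq))),
      Finset.sum_const, Finset.card_erase_of_mem (Finset.mem_univ p0),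
      Finset.card_univ, Fintype.card_fin, nsmul_eq_mul] at h
    have hcast : ((m - 1 : ℕ) : ℝ) = (m : ℝ) - 1 := by
      rw [Nat.cast_sub (by omega)]; norm_num
    rw [hcast] at h
    rw [← h, hdiag p0]
  -- the cardinality of K
  have hK : K.card = ℓ := by
    have hKeq : K = Finset.map ⟨fun i : Fin ℓ => Fin.castLE hℓ i, Fin.castLE_injective hℓ⟩
        Finset.univ := by
      ext p
      simp only [hKdef, Finset.mem_filter, Finset.mem_univ, true_and, Finset.mem_map,
        Function.Embedding.coeFn_mk]
      constructor
      · intro hp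
        exact ⟨⟨(p : ℕ), hp⟩, by ext; simp⟩
      · rintro ⟨i, rfl⟩
        exact i.2
    rw [hKeq, Finset.card_map, Finset.card_univ, Fintype.card_fin]
  -- total sum
  have hTot : ∑ p ∈ K, ∑ q ∈ K, C p q = (ℓ : ℝ) * (A + ((ℓ : ℝ) - 1) * c) := by
    have hrowK : ∀ p ∈ K, ∑ q ∈ K, C p q = A + ((ℓ : ℝ) - 1) * c := by
      intro p hp
      rw [← Finset.add_sum_erase _ _ hp, hdiag p,
        Finset.sum_congr rfl
          (fun q hq => hoff p q (Ne.symm (Finset.ne_of_mem_erase hq))),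
        Finset.sum_const, Finset.card_erase_of_mem hp, hK, nsmul_eq_mul,
        Nat.cast_sub hℓ1]
      norm_num
    rw [Finset.sum_congr rfl hrowK, Finset.sum_const, hK, nsmul_eq_mul]
  -- numerical facts
  have hfac : (0:ℝ) < (m.factorial : ℝ) := by
    exact_mod_cast Nat.factorial_pos m
  have hmR : (2:ℝ) ≤ (m:ℝ) := by exact_mod_cast hm2
  have hℓR : (ℓ:ℝ) ≤ (m:ℝ) := by exact_mod_cast hℓ
  have hmpos : (0:ℝ) < (m:ℝ) := by linarith
  -- relate G to A
  have hGA : (1 / (m : ℝ)) * G = A / (m.factorial : ℝ) := by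
    rw [eq_div_iff (ne_of_gt hfac)]
    field_simp
    linarith [hmA]
  -- the key inequality
  have hq : (0:ℝ) ≤ (m:ℝ) * ((m:ℝ) - 1) - 2 * (ℓ:ℝ) * ((m:ℝ) - (ℓ:ℝ)) := by
    nlinarith [sq_nonneg ((m:ℝ) - 2 * (ℓ:ℝ))]
  have hkey : (ℓ : ℝ) * (A + ((ℓ : ℝ) - 1) * c) ≤ (m:ℝ) / 2 * A := by
    have hm1R : (0:ℝ) < (m:ℝ) - 1 := by linarith
    have h3 : (ℓ:ℝ) * ((ℓ:ℝ) - 1) * (((m:ℝ) - 1) * c) = (ℓ:ℝ) * ((ℓ:ℝ) - 1) * (-A) := by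
      have hmc : ((m:ℝ) - 1) * c = -A := by linarith
      rw [hmc]
    have hmul : (0:ℝ) ≤ A * ((m:ℝ) * ((m:ℝ) - 1) - 2 * (ℓ:ℝ) * ((m:ℝ) - (ℓ:ℝ))) :=
      mul_nonneg hA0 hq
    have hP : (0:ℝ) ≤ ((m:ℝ) - 1) * ((m:ℝ) / 2 * A - (ℓ : ℝ) * (A + ((ℓ : ℝ) - 1) * c)) := by
      nlinarith [h3, hmul]
    have hdiv := div_nonneg hP (le_of_lt hm1R)
    rw [mul_div_cancel_left₀ _ (ne_of_gt hm1R)] at hdiv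
    linarith
  -- conclude
  rw [hswap, hTot, hGA]
  calc (1 / (m.factorial : ℝ)) * ((ℓ : ℝ) * (A + ((ℓ : ℝ) - 1) * c))
      ≤ (1 / (m.factorial : ℝ)) * ((m:ℝ) / 2 * A) := by
        apply mul_le_mul_of_nonneg_left hkey
        positivity
    _ = (m:ℝ) / 2 * (A / (m.factorial : ℝ)) := by ring
end

section
/- Under the assumptions: each f_i(·;ℓ) is L-smooth in the full variable, the pseudo-gradient at the Nash equilibrium satisfies Σ_ℓ ∇F_ℓ(x⋆) = 0, and x⋆^ℓ := P_Ω[x⋆ - α Σ_{p=0}^{ℓ-1} ∇F_{π(p)}(x⋆)] for a uniformly random permutation π, the shuffling variance σ²_{i,shuffle} := max_{ℓ} E[D_{f_{i,π(ℓ)}}(x_{i,⋆}^ℓ, x_{i,⋆})] satisfies σ²_{i,shuffle} ≤ (α² L m n / 4) σ⋆², where σ⋆² = (1/(mn)) Σ_{i=1}^n Σ_{ℓ=1}^m ‖∇f_i(x⋆;ℓ)‖². -/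
open scoped RealInnerProductSpace

lemma perm_sum_sq_le (m : ℕ) (a : Fin m → ℝ) (ha : ∑ ℓ, a ℓ = 0) (k : ℕ) (hk : k < m) :
    ∑ π : Equiv.Perm (Fin m),
      (∑ p ∈ Finset.univ.filter (fun p : Fin m => (p : ℕ) < k), a (π p)) ^ 2
      ≤ (Nat.factorial m : ℝ) / 2 * ∑ ℓ, a ℓ ^ 2 := by
  set S : ℝ := ∑ ℓ, a ℓ ^ 2 with hSdef
  have hS : 0 ≤ S := Finset.sum_nonneg fun _ _ => sq_nonneg _
  set T : Finset (Fin m) := Finset.univ.filter (fun p : Fin m => (p : ℕ) < k) with hT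
  have hTcard : T.card = k := by
    have : T = Finset.Iio (⟨k, hk⟩ : Fin m) := by
      ext p; simp [hT, Fin.lt_def]
    rw [this]; simp
  rcases Nat.eq_zero_or_pos k with rfl | hk1
  · have : T = ∅ := by ext p; simp [hT]
    rw [this]
    simp only [Finset.sum_empty, zero_pow, OfNat.ofNat_ne_zero, ne_eq, not_false_eq_true,
      Finset.sum_const, smul_zero]
    positivity
  · have hm2 : 2 ≤ m := by omega
    set c : Fin m → Fin m → ℝ := fun p q => ∑ π : Equiv.Perm (Fin m), a (π p) * a (π q) with hc
    -- transport
    have htrans : ∀ (σ : Equiv.Perm (Fin m)) (p q : Fin m), c (σ p) (σ q) = c p q := by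
      intro σ p q
      calc c (σ p) (σ q) = ∑ π : Equiv.Perm (Fin m), a ((π * σ) p) * a ((π * σ) q) := by
            simp [hc, Equiv.Perm.mul_apply]
        _ = ∑ π : Equiv.Perm (Fin m), a (π p) * a (π q) :=
            Equiv.sum_comp (Equiv.mulRight σ) (fun π => a (π p) * a (π q))
        _ = c p q := rfl
    have h01 : (0 : ℕ) < m := by omega
    set p₀ : Fin m := ⟨0, by omega⟩ with hp₀
    set q₀ : Fin m := ⟨1, by omega⟩ with hq₀
    have hpq₀ : p₀ ≠ q₀ := by simp [hp₀, hq₀, Fin.ext_iff]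
    set A : ℝ := c p₀ p₀ with hA
    set B : ℝ := c p₀ q₀ with hB
    have hdiag : ∀ p, c p p = A := by
      intro p
      have := htrans (Equiv.swap p₀ p) p₀ p₀
      simpa [Equiv.swap_apply_left] using this
    have hoff : ∀ p q, p ≠ q → c p q = B := by
      intro p q hpq
      set q₁ : Fin m := Equiv.swap p₀ p q₀ with hq₁
      have hq₁p : q₁ ≠ p := by
        have : Equiv.swap p₀ p q₀ ≠ Equiv.swap p₀ p p₀ := (Equiv.swap p₀ p).injective.ne hpq₀.symm
        simpa [hq₁, Equiv.swap_apply_left] using this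
      have key := htrans (Equiv.swap q₁ q * Equiv.swap p₀ p) p₀ q₀
      have e1 : (Equiv.swap q₁ q * Equiv.swap p₀ p) p₀ = p := by
        simp [Equiv.Perm.mul_apply, Equiv.swap_apply_left,
          Equiv.swap_apply_of_ne_of_ne hq₁p.symm hpq]
      have e2 : (Equiv.swap q₁ q * Equiv.swap p₀ p) q₀ = q := by
        simp [Equiv.Perm.mul_apply, hq₁, Equiv.swap_apply_left]
      rw [e1, e2] at key
      exact key
    -- relation 1 : m * A = m! * S
    have hrel1 : (m : ℝ) * A = (Nat.factorial m : ℝ) * S := by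
      have h1 : ∑ p : Fin m, c p p = (m : ℝ) * A := by
        simp [hdiag, Finset.sum_const, mul_comm]
      have h2 : ∑ p : Fin m, c p p = (Nat.factorial m : ℝ) * S := by
        rw [hc]
        simp only [← sq]
        rw [Finset.sum_comm]
        have : ∀ π : Equiv.Perm (Fin m), ∑ p : Fin m, a (π p) ^ 2 = S := by
          intro π; exact Equiv.sum_comp π (fun ℓ => a ℓ ^ 2)
        rw [Finset.sum_congr rfl (fun π _ => this π)]
        simp [Finset.sum_const, Fintype.card_perm, mul_comm]
      rw [← h1, h2]
    -- relation 2 : A + (m-1) * B = 0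
    have hrel2 : A + ((m : ℝ) - 1) * B = 0 := by
      have h1 : ∑ q : Fin m, c p₀ q = 0 := by
        rw [hc, Finset.sum_comm]
        have : ∀ π : Equiv.Perm (Fin m), ∑ q : Fin m, a (π p₀) * a (π q) = 0 := by
          intro π
          rw [← Finset.mul_sum, Equiv.sum_comp π a, ha, mul_zero]
        simp [this]
      have h2 : ∑ q : Fin m, c p₀ q = A + ((m : ℝ) - 1) * B := by
        rw [← Finset.add_sum_erase _ _ (Finset.mem_univ p₀)]
        congr 1
        rw [Finset.sum_congr rfl (fun q hq => hoff p₀ q (Finset.ne_of_mem_erase hq).symm)]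
        rw [Finset.sum_const, Finset.card_erase_of_mem (Finset.mem_univ p₀)]
        simp only [Finset.card_univ, Fintype.card_fin, nsmul_eq_mul]
        congr 1
        push_cast [Nat.cast_sub (by omega : 1 ≤ m)]
        ring
      rw [← h2, h1]
    have hAnn : 0 ≤ A := by
      rw [hA, hc]
      exact Finset.sum_nonneg fun π _ => mul_self_nonneg _
    -- main computation
    have hmain : ∑ π : Equiv.Perm (Fin m), (∑ p ∈ T, a (π p)) ^ 2
        = (k : ℝ) * A + (k : ℝ) * ((k : ℝ) - 1) * B := by
      have expand : ∀ π : Equiv.Perm (Fin m),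
          (∑ p ∈ T, a (π p)) ^ 2 = ∑ p ∈ T, ∑ q ∈ T, a (π p) * a (π q) := by
        intro π; rw [sq, Finset.sum_mul_sum]
      rw [Finset.sum_congr rfl (fun π _ => expand π), Finset.sum_comm]
      rw [Finset.sum_congr rfl (fun p _ => Finset.sum_comm)]
      have inner : ∀ p ∈ T, ∑ q ∈ T, (∑ π : Equiv.Perm (Fin m), a (π p) * a (π q))
          = A + ((k : ℝ) - 1) * B := by
        intro p hp
        have : ∑ q ∈ T, c p q = c p p + ∑ q ∈ T.erase p, c p q := by
          rw [Finset.add_sum_erase _ _ hp]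
        rw [show (∑ q ∈ T, (∑ π : Equiv.Perm (Fin m), a (π p) * a (π q))) = ∑ q ∈ T, c p q from rfl,
          this, hdiag]
        congr 1
        rw [Finset.sum_congr rfl (fun q hq => hoff p q (Finset.ne_of_mem_erase hq).symm)]
        rw [Finset.sum_const, Finset.card_erase_of_mem hp, hTcard, nsmul_eq_mul]
        congr 1
        push_cast [Nat.cast_sub (by omega : 1 ≤ k)]
        ring
      have : ∀ p ∈ T, ∑ q ∈ T, ∑ π : Equiv.Perm (Fin m), a (π p) * a (π q)
          = A + ((k : ℝ) - 1) * B := inner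
      rw [Finset.sum_congr rfl this, Finset.sum_const, hTcard, nsmul_eq_mul]
      ring
    rw [hmain]
    -- final inequality
    have hineq : 2 * (k : ℝ) * ((m : ℝ) - k) ≤ (m : ℝ) * ((m : ℝ) - 1) := by
      have hm2' : (2 : ℝ) ≤ (m : ℝ) := by exact_mod_cast hm2
      nlinarith [sq_nonneg ((m : ℝ) - 2 * k)]
    have hmpos : (0 : ℝ) < (m : ℝ) - 1 := by
      have : (2 : ℝ) ≤ (m : ℝ) := by exact_mod_cast hm2
      linarith
    rw [← mul_le_mul_iff_right₀ hmpos]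
    have lhs_eq : ((m : ℝ) - 1) * ((k : ℝ) * A + (k : ℝ) * ((k : ℝ) - 1) * B)
        = (k : ℝ) * ((m : ℝ) - (k : ℝ)) * A := by
      linear_combination ((k : ℝ) * ((k : ℝ) - 1)) * hrel2
    rw [lhs_eq]
    have hkm : (k : ℝ) ≤ (m : ℝ) := by exact_mod_cast hk.le
    have hk0 : (0 : ℝ) ≤ (k : ℝ) := by positivity
    nlinarith [mul_nonneg (by linarith : (0:ℝ) ≤ (m : ℝ) * ((m:ℝ) - 1) - 2 * k * ((m:ℝ) - k)) hAnn,
      hrel1]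

/-- shuffling-variance bound. With `n` players with scalar actions,
`m` components per player, `L`-smooth components, a Nash equilibrium `x⋆ ∈ Ω`
whose pseudo-gradient components sum to zero, and reference points
`x⋆^ℓ = P_Ω[x⋆ - α Σ_{p<ℓ} ∇F_{π(p)}(x⋆)]`, the shuffling variance of player `i`
(`max_ℓ E[D_{f_{i,π(ℓ)}}(x⋆^ℓ, x⋆)]`, expectation over the uniformly random
permutation `π`) is bounded by `(α² L m n / 4) σ⋆²`. -/
theorem shuffling_variance_bound
    (n m : ℕ) (hn : 0 < n) (hm : 0 < m) (α L : ℝ) (hα : 0 < α) (hL : 0 < L)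
    (f : Fin n → Fin m → EuclideanSpace ℝ (Fin n) → ℝ)
    (gi : Fin n → Fin m → EuclideanSpace ℝ (Fin n) → ℝ)
    (Ω : Set (EuclideanSpace ℝ (Fin n)))
    (hΩconv : Convex ℝ Ω) (hΩcp : IsCompact Ω) (hΩne : Ω.Nonempty)
    (P : EuclideanSpace ℝ (Fin n) → EuclideanSpace ℝ (Fin n))
    -- `P` is the Euclidean projection onto `Ω` (variational characterization)
    (hP : ∀ z, P z ∈ Ω ∧ ∀ w ∈ Ω, ⟪z - P z, w - P z⟫ ≤ 0)
    (xstar : EuclideanSpace ℝ (Fin n)) (hx : xstar ∈ Ω)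
    -- each `f_i(·;ℓ)` is `L`-smooth in the full variable (Bregman upper bound)
    (hsmooth : ∀ i ℓ x y,
      f i ℓ x - f i ℓ y - gi i ℓ y * (x i - y i) ≤ L / 2 * ‖x - y‖ ^ 2)
    -- the pseudo-gradient components vanish in total at the equilibrium
    (heq : ∀ i, ∑ ℓ, gi i ℓ xstar = 0) :
    ∀ i : Fin n, ∀ ℓ : Fin m,
      (1 / (Nat.factorial m : ℝ)) *
          ∑ π : Equiv.Perm (Fin m),
            (f i (π ℓ)
                (P (xstar - α • ((WithLp.equiv 2 (Fin n → ℝ)).symm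
                    (fun i' => ∑ p ∈ Finset.univ.filter
                        (fun p : Fin m => (p : ℕ) < (ℓ : ℕ)),
                      gi i' (π p) xstar))))
              - f i (π ℓ) xstar
              - gi i (π ℓ) xstar *
                ((P (xstar - α • ((WithLp.equiv 2 (Fin n → ℝ)).symm
                    (fun i' => ∑ p ∈ Finset.univ.filter
                        (fun p : Fin m => (p : ℕ) < (ℓ : ℕ)),
                      gi i' (π p) xstar)))) i - xstar i))
        ≤ α ^ 2 * L * (m : ℝ) * (n : ℝ) / 4 *
            ((1 / ((m : ℝ) * (n : ℝ))) * ∑ i', ∑ ℓ', (gi i' ℓ' xstar) ^ 2) := by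
  intro i ℓ
  set T : Finset (Fin m) := Finset.univ.filter (fun p : Fin m => (p : ℕ) < (ℓ : ℕ)) with hT
  set V : Equiv.Perm (Fin m) → EuclideanSpace ℝ (Fin n) := fun π =>
    (WithLp.equiv 2 (Fin n → ℝ)).symm (fun i' => ∑ p ∈ T, gi i' (π p) xstar) with hV
  set z : Equiv.Perm (Fin m) → EuclideanSpace ℝ (Fin n) := fun π => xstar - α • V π with hz
  -- step 1: pointwise bound via smoothness and projection nonexpansiveness
  have step1 : ∀ π : Equiv.Perm (Fin m),
      f i (π ℓ) (P (z π)) - f i (π ℓ) xstar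
        - gi i (π ℓ) xstar * ((P (z π)) i - xstar i)
      ≤ L / 2 * α ^ 2 * ∑ i', (∑ p ∈ T, gi i' (π p) xstar) ^ 2 := by
    intro π
    have h1 := hsmooth i (π ℓ) (P (z π)) xstar
    -- projection bound
    have hproj : ‖P (z π) - xstar‖ ^ 2 ≤ ‖z π - xstar‖ ^ 2 := by
      obtain ⟨hmem, hvar⟩ := hP (z π)
      have h2 := hvar xstar hx
      -- ⟪z - Pz, x⋆ - Pz⟫ ≤ 0
      have key : ‖P (z π) - xstar‖ ^ 2 ≤ ⟪z π - xstar, P (z π) - xstar⟫ := by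
        have expand : ⟪z π - xstar, P (z π) - xstar⟫
            = ‖P (z π) - xstar‖ ^ 2 + ⟪z π - P (z π), xstar - P (z π)⟫ * (-1)
              + ⟪z π - P (z π), xstar - P (z π)⟫ * 0 := by
          have : z π - xstar = (P (z π) - xstar) + (z π - P (z π)) := by abel
          rw [this, inner_add_left, real_inner_self_eq_norm_sq]
          have : ⟪z π - P (z π), P (z π) - xstar⟫ = - ⟪z π - P (z π), xstar - P (z π)⟫ := by
            rw [← inner_neg_right]; congr 1; abel
          rw [this]; ring
        have hCS := real_inner_le_norm (z π - xstar) (P (z π) - xstar)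
        nlinarith [norm_nonneg (P (z π) - xstar), norm_nonneg (z π - xstar),
          sq_nonneg (‖z π - xstar‖ - ‖P (z π) - xstar‖)]
      have hCS := real_inner_le_norm (z π - xstar) (P (z π) - xstar)
      nlinarith [norm_nonneg (P (z π) - xstar), norm_nonneg (z π - xstar),
        sq_nonneg (‖z π - xstar‖ - ‖P (z π) - xstar‖)]
    have hznorm : ‖z π - xstar‖ ^ 2 = α ^ 2 * ∑ i', (∑ p ∈ T, gi i' (π p) xstar) ^ 2 := by
      have h3 : z π - xstar = -(α • V π) := by rw [hz]; simp only [sub_sub_cancel_left]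
      rw [h3, norm_neg, norm_smul, mul_pow]
      congr 1
      · rw [Real.norm_eq_abs, sq_abs]
      · rw [EuclideanSpace.norm_eq, Real.sq_sqrt (Finset.sum_nonneg fun _ _ => sq_nonneg _)]
        congr 1; ext i'
        rw [hV]
        simp [sq_abs]
    calc f i (π ℓ) (P (z π)) - f i (π ℓ) xstar
          - gi i (π ℓ) xstar * ((P (z π)) i - xstar i)
        ≤ L / 2 * ‖P (z π) - xstar‖ ^ 2 := h1
      _ ≤ L / 2 * ‖z π - xstar‖ ^ 2 := by nlinarith
      _ = L / 2 * α ^ 2 * ∑ i', (∑ p ∈ T, gi i' (π p) xstar) ^ 2 := by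
          rw [hznorm]; ring
  -- step 2: sum over permutations + variance lemma
  have step2 : ∑ π : Equiv.Perm (Fin m),
      (f i (π ℓ) (P (z π)) - f i (π ℓ) xstar
        - gi i (π ℓ) xstar * ((P (z π)) i - xstar i))
      ≤ L / 2 * α ^ 2 * ((Nat.factorial m : ℝ) / 2 * ∑ i', ∑ ℓ', (gi i' ℓ' xstar) ^ 2) := by
    calc ∑ π : Equiv.Perm (Fin m),
        (f i (π ℓ) (P (z π)) - f i (π ℓ) xstar
          - gi i (π ℓ) xstar * ((P (z π)) i - xstar i))
        ≤ ∑ π : Equiv.Perm (Fin m),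
            L / 2 * α ^ 2 * ∑ i', (∑ p ∈ T, gi i' (π p) xstar) ^ 2 :=
          Finset.sum_le_sum fun π _ => step1 π
      _ = L / 2 * α ^ 2 * ∑ i', ∑ π : Equiv.Perm (Fin m),
            (∑ p ∈ T, gi i' (π p) xstar) ^ 2 := by
          rw [← Finset.mul_sum, Finset.sum_comm]
      _ ≤ L / 2 * α ^ 2 * ∑ i', ((Nat.factorial m : ℝ) / 2 * ∑ ℓ', (gi i' ℓ' xstar) ^ 2) := by
          apply mul_le_mul_of_nonneg_left _ (by positivity)
          apply Finset.sum_le_sum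
          intro i' _
          exact perm_sum_sq_le m (fun ℓ' => gi i' ℓ' xstar) (heq i') (ℓ : ℕ) ℓ.isLt
      _ = L / 2 * α ^ 2 * ((Nat.factorial m : ℝ) / 2 * ∑ i', ∑ ℓ', (gi i' ℓ' xstar) ^ 2) := by
          rw [← Finset.mul_sum]
  -- conclude
  have hfac : (0 : ℝ) < (Nat.factorial m : ℝ) := by positivity
  have hm' : (0 : ℝ) < (m : ℝ) := by exact_mod_cast hm
  have hn' : (0 : ℝ) < (n : ℝ) := by exact_mod_cast hn
  have hrhs : α ^ 2 * L * (m : ℝ) * (n : ℝ) / 4 *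
      ((1 / ((m : ℝ) * (n : ℝ))) * ∑ i', ∑ ℓ', (gi i' ℓ' xstar) ^ 2)
      = (1 / (Nat.factorial m : ℝ)) *
        (L / 2 * α ^ 2 * ((Nat.factorial m : ℝ) / 2 * ∑ i', ∑ ℓ', (gi i' ℓ' xstar) ^ 2)) := by
    field_simp
    ring
  rw [hrhs]
  exact mul_le_mul_of_nonneg_left step2 (by positivity)
end

section
/- Let (V_k) be a sequence of nonnegative random variables adapted to a filtration (F_k) with E[V_0] < ∞, satisfying E[V_{k+1} | F_k] ≤ (1 - u_k)V_k + β_k for all k ≥ 0, where 0 ≤ u_k ≤ 1, β_k ≥ 0, Σ u_k = ∞, Σ β_k < ∞, and β_k/u_k → 0. Then V_k → 0 almost surely and E[V_k] → 0. -/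
open MeasureTheory Filter

lemma chung_lemma (a u β : ℕ → ℝ) (ha : ∀ k, 0 ≤ a k)
    (hu0 : ∀ k, 0 ≤ u k) (hu1 : ∀ k, u k ≤ 1) (hβ0 : ∀ k, 0 ≤ β k)
    (husum : Tendsto (fun n => ∑ k ∈ Finset.range n, u k) atTop atTop)
    (hβsum : Summable β)
    (hrec : ∀ k, a (k + 1) ≤ (1 - u k) * a k + β k) :
    Tendsto a atTop (nhds 0) := by
  rw [Metric.tendsto_atTop]
  intro ε hε
  -- choose N with tail of β small
  obtain ⟨N, hN⟩ : ∃ N, (∑' j, β j) - ∑ j ∈ Finset.range N, β j < ε / 4 := by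
    have h := hβsum.hasSum.tendsto_sum_nat
    have h2 : Tendsto (fun n => (∑' j, β j) - ∑ j ∈ Finset.range n, β j) atTop (nhds 0) := by
      simpa using (tendsto_const_nhds (x := ∑' j, β j)).sub h
    have := (h2.eventually (eventually_lt_nhds (by positivity : (0:ℝ) < ε / 4))).exists
    simpa using this
  have htail : ∀ m, N ≤ m → ∑ j ∈ Finset.Ico N m, β j < ε / 4 := by
    intro m hm
    have : ∑ j ∈ Finset.Ico N m, β j = ∑ j ∈ Finset.range m, β j - ∑ j ∈ Finset.range N, β j := by
      rw [Finset.sum_Ico_eq_sub _ hm]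
    rw [this]
    have hle : ∑ j ∈ Finset.range m, β j ≤ ∑' j, β j :=
      Summable.sum_le_tsum _ (fun i _ => hβ0 i) hβsum
    linarith
  -- key inductive bound
  have key : ∀ m, a (N + m) ≤ a N * ∏ j ∈ Finset.Ico N (N + m), (1 - u j)
      + ∑ j ∈ Finset.Ico N (N + m), β j := by
    intro m
    induction m with
    | zero => simp
    | succ m ih =>
      have hNm : N ≤ N + m := Nat.le_add_right _ _
      have h1 : (0:ℝ) ≤ 1 - u (N + m) := by linarith [hu1 (N + m)]
      have h2 : 1 - u (N + m) ≤ 1 := by linarith [hu0 (N + m)]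
      have hSnn : (0:ℝ) ≤ ∑ j ∈ Finset.Ico N (N + m), β j :=
        Finset.sum_nonneg fun j _ => hβ0 j
      have := hrec (N + m)
      have hstep : a (N + m + 1) ≤ (1 - u (N+m)) * (a N * ∏ j ∈ Finset.Ico N (N + m), (1 - u j)
          + ∑ j ∈ Finset.Ico N (N + m), β j) + β (N + m) := by
        calc a (N + m + 1) ≤ (1 - u (N+m)) * a (N+m) + β (N+m) := hrec _
          _ ≤ _ := by nlinarith [ih]
      rw [show N + (m+1) = (N + m) + 1 from rfl,
        Finset.prod_Ico_succ_top hNm, Finset.sum_Ico_succ_top hNm]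
      have hPnn : (0:ℝ) ≤ ∏ j ∈ Finset.Ico N (N + m), (1 - u j) :=
        Finset.prod_nonneg fun j _ => by linarith [hu1 j]
      nlinarith [ha N]
  -- product bound by exp
  have hprod : ∀ m, ∏ j ∈ Finset.Ico N (N + m), (1 - u j)
      ≤ Real.exp (-(∑ j ∈ Finset.Ico N (N + m), u j)) := by
    intro m
    calc ∏ j ∈ Finset.Ico N (N + m), (1 - u j)
        ≤ ∏ j ∈ Finset.Ico N (N + m), Real.exp (-(u j)) := by
          apply Finset.prod_le_prod (fun j _ => by linarith [hu1 j])
          intro j _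
          have := Real.add_one_le_exp (-(u j))
          linarith
      _ = Real.exp (∑ j ∈ Finset.Ico N (N + m), -(u j)) := (Real.exp_sum _ _).symm
      _ = Real.exp (-(∑ j ∈ Finset.Ico N (N + m), u j)) := by rw [Finset.sum_neg_distrib]
  -- a N * exp(-Σ) → 0
  have hsumIco : Tendsto (fun m => ∑ j ∈ Finset.Ico N (N + m), u j) atTop atTop := by
    have h1 : Tendsto (fun m => ∑ j ∈ Finset.range (N + m), u j) atTop atTop :=
      husum.comp (by simpa [Nat.add_comm] using tendsto_add_atTop_nat N)
    have h2 := tendsto_atTop_add_const_right atTop (-(∑ j ∈ Finset.range N, u j)) h1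
    refine h2.congr fun m => ?_
    rw [Finset.sum_Ico_eq_sub _ (Nat.le_add_right _ _), sub_eq_add_neg]
  have hexp : Tendsto (fun m => a N * Real.exp (-(∑ j ∈ Finset.Ico N (N + m), u j)))
      atTop (nhds 0) := by
    have := (Real.tendsto_exp_neg_atTop_nhds_zero).comp hsumIco
    simpa using (this.const_mul (a N))
  obtain ⟨M, hM⟩ := (Metric.tendsto_atTop.mp hexp (ε / 4) (by positivity))
  refine ⟨N + M, fun n hn => ?_⟩
  obtain ⟨m, rfl⟩ : ∃ m, n = N + m := ⟨n - N, by omega⟩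
  have hmM : M ≤ m := by omega
  have hexp_small : a N * Real.exp (-(∑ j ∈ Finset.Ico N (N + m), u j)) < ε / 4 := by
    have := hM m hmM
    rwa [Real.dist_eq, sub_zero,
      abs_of_nonneg (mul_nonneg (ha N) (Real.exp_pos _).le)] at this
  have h1 : a (N + m) ≤ a N * Real.exp (-(∑ j ∈ Finset.Ico N (N + m), u j))
      + ∑ j ∈ Finset.Ico N (N + m), β j := by
    have := key m
    have hmul : a N * ∏ j ∈ Finset.Ico N (N + m), (1 - u j)
        ≤ a N * Real.exp (-(∑ j ∈ Finset.Ico N (N + m), u j)) :=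
      mul_le_mul_of_nonneg_left (hprod m) (ha N)
    linarith
  have h2 := htail (N + m) (Nat.le_add_right _ _)
  rw [Real.dist_eq, sub_zero, abs_of_nonneg (ha _)]
  linarith

/-- Robbins–Siegmund-type lemma (Polyak, Lemma 10, p. 49).
If nonnegative adapted `V_k` satisfy
`E[V_{k+1} | F_k] ≤ (1-u_k) V_k + β_k` with deterministic `0 ≤ u_k ≤ 1`,
`β_k ≥ 0`, `Σ u_k = ∞`, `Σ β_k < ∞` and `β_k / u_k → 0`, then `V_k → 0`
almost surely and `E[V_k] → 0`. -/
theorem robbins_siegmund_polyak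
    {α : Type*} {mα : MeasurableSpace α} {μ : Measure α} [IsProbabilityMeasure μ]
    (ℱ : Filtration ℕ mα)
    (V : ℕ → α → ℝ) (u β : ℕ → ℝ)
    (hadapted : Adapted ℱ V)
    (hint : ∀ k, Integrable (V k) μ)
    (hpos : ∀ k, ∀ᵐ ω ∂μ, 0 ≤ V k ω)
    (hu0 : ∀ k, 0 ≤ u k) (hu1 : ∀ k, u k ≤ 1) (hβ0 : ∀ k, 0 ≤ β k)
    (husum : Tendsto (fun n => ∑ k ∈ Finset.range n, u k) atTop atTop)
    (hβsum : Summable β)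
    (hratio : Tendsto (fun k => β k / u k) atTop (nhds 0))
    (hrec : ∀ k, ∀ᵐ ω ∂μ, (μ[V (k + 1) | ℱ k]) ω ≤ (1 - u k) * V k ω + β k) :
    (∀ᵐ ω ∂μ, Tendsto (fun k => V k ω) atTop (nhds 0)) ∧
      Tendsto (fun k => ∫ ω, V k ω ∂μ) atTop (nhds 0) := by
  set C : ℝ := ∑' j, β j with hC
  set S : ℕ → ℝ := fun n => ∑ j ∈ Finset.range n, β j with hS
  have hS0 : ∀ n, 0 ≤ S n := fun n => Finset.sum_nonneg fun j _ => hβ0 j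
  have hSC : ∀ n, S n ≤ C := fun n => Summable.sum_le_tsum _ (fun i _ => hβ0 i) hβsum
  have hC0 : 0 ≤ C := le_trans (hS0 0) (hSC 0)
  -- expectation recursion
  have hEa : ∀ k, ∫ ω, V (k+1) ω ∂μ ≤ (1 - u k) * ∫ ω, V k ω ∂μ + β k := by
    intro k
    have h1 : ∫ ω, V (k+1) ω ∂μ = ∫ ω, (μ[V (k+1) | ℱ k]) ω ∂μ :=
      (integral_condExp (ℱ.le k)).symm
    have h2 : ∫ ω, (μ[V (k+1) | ℱ k]) ω ∂μ
        ≤ ∫ ω, ((1 - u k) * V k ω + β k) ∂μ := by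
      refine integral_mono_ae integrable_condExp
        (((hint k).const_mul _).add (integrable_const _)) ?_
      exact hrec k
    have h3 : ∫ ω, ((1 - u k) * V k ω + β k) ∂μ
        = (1 - u k) * ∫ ω, V k ω ∂μ + β k := by
      rw [integral_add ((hint k).const_mul _) (integrable_const _),
        integral_const_mul, integral_const, probReal_univ]
      simp
    rw [h1]; rw [h3] at h2; exact h2
  have hE0 : ∀ k, 0 ≤ ∫ ω, V k ω ∂μ := fun k => integral_nonneg_of_ae (hpos k)
  have hEtend : Tendsto (fun k => ∫ ω, V k ω ∂μ) atTop (nhds 0) :=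
    chung_lemma _ u β hE0 hu0 hu1 hβ0 husum hβsum hEa
  refine ⟨?_, hEtend⟩
  -- E V n bounded
  have hEbdd : ∀ n, ∫ ω, V n ω ∂μ ≤ ∫ ω, V 0 ω ∂μ + S n := by
    intro n
    induction n with
    | zero => simp [hS]
    | succ n ih =>
      have h1 := hEa n
      have h2 : (1 - u n) * ∫ ω, V n ω ∂μ ≤ ∫ ω, V n ω ∂μ := by
        nlinarith [hE0 n, hu0 n, hu1 n]
      have : S (n+1) = S n + β n := Finset.sum_range_succ _ _
      linarith
  -- the supermartingale W
  set W : ℕ → α → ℝ := fun k ω => V k ω - S k with hW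
  have hWadapted : Adapted ℱ W := fun k => (hadapted k).sub measurable_const
  have hWint : ∀ k, Integrable (W k) μ := fun k => (hint k).sub (integrable_const _)
  have hWsuper : Supermartingale W ℱ μ := by
    refine supermartingale_nat (fun k => (hWadapted k).stronglyMeasurable) hWint fun k => ?_
    have hce : μ[W (k+1) | ℱ k] =ᵐ[μ] fun ω => (μ[V (k+1) | ℱ k]) ω - S (k+1) := by
      have h1 : μ[W (k+1) | ℱ k]
          =ᵐ[μ] μ[V (k+1) | ℱ k] - μ[(fun _ => S (k+1)) | ℱ k] :=
        condExp_sub (hint (k+1)) (integrable_const _) _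
      have h2 : μ[(fun _ : α => S (k+1)) | ℱ k] = fun _ => S (k+1) :=
        condExp_const (ℱ.le k) _
      filter_upwards [h1] with ω hω1
      simp only [Pi.sub_apply] at hω1
      rw [hω1, h2]
    filter_upwards [hce, hrec k, hpos k] with ω h1 h2 h3
    have hSs : S (k+1) = S k + β k := Finset.sum_range_succ _ _
    have : (1 - u k) * V k ω ≤ V k ω := by nlinarith [hu0 k, hu1 k]
    simp only [hW]
    rw [h1, hSs]
    linarith
  -- L1 boundedness
  set R : NNReal := (∫ ω, V 0 ω ∂μ + 2 * C).toNNReal with hR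
  have hbdd : ∀ n, eLpNorm ((-W) n) 1 μ ≤ (R : ENNReal) := by
    intro n
    have h1 : eLpNorm ((-W) n) 1 μ = eLpNorm (W n) 1 μ := by
      simp [eLpNorm_neg]
    rw [h1, eLpNorm_one_eq_lintegral_enorm]
    have h2 : ∫⁻ ω, ‖W n ω‖₊ ∂μ ≤ ∫⁻ ω, ENNReal.ofReal (V n ω + C) ∂μ := by
      refine lintegral_mono_ae ?_
      filter_upwards [hpos n] with ω hω
      rw [show (‖W n ω‖₊ : ENNReal) = ENNReal.ofReal ‖W n ω‖ from (ofReal_norm _).symm]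
      apply ENNReal.ofReal_le_ofReal
      simp only [hW, Real.norm_eq_abs]
      rw [abs_le]
      constructor <;> [skip; skip] <;> nlinarith [hS0 n, hSC n, hC0]
    have h3 : ∫⁻ ω, ENNReal.ofReal (V n ω + C) ∂μ
        = ENNReal.ofReal (∫ ω, (V n ω + C) ∂μ) := by
      rw [← ofReal_integral_eq_lintegral_ofReal
        (show Integrable (fun ω => V n ω + C) μ from (hint n).add (integrable_const _))]
      filter_upwards [hpos n] with ω hω
      positivity
    have h4 : ∫ ω, (V n ω + C) ∂μ = (∫ ω, V n ω ∂μ) + C := by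
      rw [integral_add (hint n) (integrable_const _), integral_const, probReal_univ]
      simp
    have h5 : ∫ ω, (V n ω + C) ∂μ ≤ ∫ ω, V 0 ω ∂μ + 2 * C := by
      rw [h4]; have := hEbdd n; have := hSC n; linarith
    calc ∫⁻ ω, ‖W n ω‖₊ ∂μ ≤ ENNReal.ofReal (∫ ω, (V n ω + C) ∂μ) := h2.trans_eq h3
      _ ≤ ENNReal.ofReal (∫ ω, V 0 ω ∂μ + 2 * C) := ENNReal.ofReal_le_ofReal h5
      _ = (R : ENNReal) := rfl
  -- a.s. convergence of W, hence of V
  have hconv := hWsuper.neg.ae_tendsto_limitProcess hbdd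
  set L : α → ℝ := ℱ.limitProcess (-W) μ with hL
  set Λ : α → ℝ := fun ω => -L ω + C with hΛ
  have hStend : Tendsto S atTop (nhds C) := hβsum.hasSum.tendsto_sum_nat
  have hVconv : ∀ᵐ ω ∂μ, Tendsto (fun n => V n ω) atTop (nhds (Λ ω)) := by
    filter_upwards [hconv] with ω hω
    have : Tendsto (fun n => -((-W) n ω) + S n) atTop (nhds (-L ω + C)) :=
      (hω.neg).add hStend
    refine this.congr fun n => ?_
    simp [hW]
  -- Λ is measurable
  have hΛmeas : Measurable Λ := by
    have : StronglyMeasurable L := Filtration.stronglyMeasurable_limit_process'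
    exact (this.measurable.neg).add_const C
  -- Λ ≥ 0 a.e.
  have hΛpos : ∀ᵐ ω ∂μ, 0 ≤ Λ ω := by
    have hall : ∀ᵐ ω ∂μ, ∀ n, 0 ≤ V n ω := ae_all_iff.mpr hpos
    filter_upwards [hall, hVconv] with ω h1 h2
    exact le_of_tendsto_of_tendsto' tendsto_const_nhds h2 h1
  -- Fatou: ∫⁻ ofReal Λ = 0
  have hfatou : ∫⁻ ω, ENNReal.ofReal (Λ ω) ∂μ = 0 := by
    have hle : ∫⁻ ω, ENNReal.ofReal (Λ ω) ∂μ
        ≤ liminf (fun n => ∫⁻ ω, ENNReal.ofReal (V n ω) ∂μ) atTop := by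
      have h1 : ∫⁻ ω, ENNReal.ofReal (Λ ω) ∂μ
          = ∫⁻ ω, liminf (fun n => ENNReal.ofReal (V n ω)) atTop ∂μ := by
        refine lintegral_congr_ae ?_
        filter_upwards [hVconv] with ω hω
        exact (((ENNReal.continuous_ofReal.tendsto _).comp hω).liminf_eq).symm
      rw [h1]
      exact lintegral_liminf_le' fun n =>
        (ENNReal.measurable_ofReal.comp_aemeasurable (hint n).aestronglyMeasurable.aemeasurable)
    have heq : ∀ n, ∫⁻ ω, ENNReal.ofReal (V n ω) ∂μ = ENNReal.ofReal (∫ ω, V n ω ∂μ) :=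
      fun n => (ofReal_integral_eq_lintegral_ofReal (hint n) (hpos n)).symm
    have h2 : Tendsto (fun n => ∫⁻ ω, ENNReal.ofReal (V n ω) ∂μ) atTop (nhds 0) := by
      simp_rw [heq]
      have := (ENNReal.continuous_ofReal.tendsto 0).comp hEtend
      simpa [Function.comp_def] using this
    rw [h2.liminf_eq] at hle
    exact le_antisymm hle zero_le
  have hΛ0 : ∀ᵐ ω ∂μ, Λ ω = 0 := by
    have := (lintegral_eq_zero_iff (ENNReal.measurable_ofReal.comp hΛmeas)).mp hfatou
    filter_upwards [this, hΛpos] with ω h1 h2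
    have : ENNReal.ofReal (Λ ω) = 0 := h1
    rw [ENNReal.ofReal_eq_zero] at this
    linarith
  filter_upwards [hVconv, hΛ0] with ω h1 h2
  rwa [h2] at h1
end
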